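/- Let a_1 ≤ ... ≤ a_B be reals, F̂_B the empirical CDF of this sample, and n ≥ 1. Then ∑_{j=1}^B (F̂_B(a_j)^n - F̂_B(a_{j-1})^n) · a_j = B^{-n} ∑_{(i_1,...,i_n)} max{a_{i_1},...,a_{i_n}}, where F̂_B(a_0) := 0 and the right sum is over all n-tuples from {1,...,B}; this holds even when the a_j contain ties. -/

import Mathlib

open Finset

-- counting lemma: (# of i with a_i ≤ t)^n = # of tuples with all coords ≤ t
lemma pow_cnt_eq (n B : ℕ) (a : ℕ → ℝ) (t : ℝ) :
    ((∑ i ∈ Finset.Icc 1 B, if a i ≤ t then (1 : ℝ) else 0)) ^ n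
      = ∑ f : Fin n → Fin B,
          if (∀ i : Fin n, a ((f i : ℕ) + 1) ≤ t) then (1 : ℝ) else 0 := by
  classical
  have h1 : (∑ i ∈ Finset.Icc 1 B, if a i ≤ t then (1 : ℝ) else 0)
      = ∑ k : Fin B, if a ((k : ℕ) + 1) ≤ t then (1 : ℝ) else 0 := by
    rw [← Finset.Ico_add_one_right_eq_Icc, Finset.sum_Ico_eq_sum_range,
      Fin.sum_univ_eq_sum_range (fun k => if a (k + 1) ≤ t then (1 : ℝ) else 0) B]
    simp [add_comm]
  rw [h1, ← Fin.prod_const n, Finset.prod_univ_sum]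
  rw [Fintype.piFinset_univ]
  refine Finset.sum_congr rfl fun f _ => ?_
  rw [Finset.prod_boole]
  simp

-- telescoping lemma per tuple
lemma telescope_sum (B : ℕ) (a : ℕ → ℝ)
    (ha : ∀ i j, 1 ≤ i → i ≤ j → j ≤ B → a i ≤ a j)
    (M : ℝ) (m : ℕ) (hm1 : 1 ≤ m) (hmB : m ≤ B) (hM : M = a m) :
    ∑ j ∈ Finset.Icc 1 B,
      ((if M ≤ a j then (1 : ℝ) else 0)
        - if j = 1 then (0 : ℝ) else (if M ≤ a (j - 1) then (1 : ℝ) else 0)) * a j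
      = M := by
  classical
  have hex : ∃ j, 1 ≤ j ∧ M ≤ a j := ⟨m, hm1, le_of_eq hM⟩
  set J := Nat.find hex with hJdef
  obtain ⟨hJ1, hJM⟩ := Nat.find_spec hex
  have hJm : J ≤ m := Nat.find_min' hex ⟨hm1, le_of_eq hM⟩
  have hJB : J ≤ B := hJm.trans hmB
  have hMJ : M = a J := by
    refine le_antisymm hJM ?_
    rw [hM]; exact ha J m hJ1 hJm hmB
  have key : ∀ j ∈ Finset.Icc 1 B,
      ((if M ≤ a j then (1 : ℝ) else 0)
        - if j = 1 then (0 : ℝ) else (if M ≤ a (j - 1) then (1 : ℝ) else 0)) * a j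
      = if j = J then a j else 0 := by
    intro j hj
    rw [Finset.mem_Icc] at hj
    obtain ⟨hj1, hjB⟩ := hj
    rcases lt_trichotomy j J with h | h | h
    · -- j < J : both indicators 0
      have h0 : ¬ M ≤ a j := fun hc => Nat.find_min hex h ⟨hj1, hc⟩
      have hx : (if M ≤ a j then (1 : ℝ) else 0) = 0 := if_neg h0
      have hy : (if j = 1 then (0 : ℝ) else (if M ≤ a (j - 1) then (1 : ℝ) else 0)) = 0 := by
        rcases eq_or_ne j 1 with h1 | h1
        · rw [if_pos h1]
        · rw [if_neg h1, if_neg]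
          intro hc
          exact Nat.find_min hex (show j - 1 < J by omega) ⟨by omega, hc⟩
      rw [hx, hy, if_neg (show j ≠ J by omega)]; ring
    · -- j = J
      have hx : (if M ≤ a j then (1 : ℝ) else 0) = 1 := if_pos (h ▸ hJM)
      have hy : (if j = 1 then (0 : ℝ) else (if M ≤ a (j - 1) then (1 : ℝ) else 0)) = 0 := by
        rcases eq_or_ne j 1 with h1 | h1
        · rw [if_pos h1]
        · rw [if_neg h1, if_neg]
          intro hc
          exact Nat.find_min hex (show j - 1 < J by omega) ⟨by omega, hc⟩
      rw [hx, hy, if_pos h]; ring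
    · -- j > J : both indicators 1
      have hx : (if M ≤ a j then (1 : ℝ) else 0) = 1 :=
        if_pos (hJM.trans (ha J j hJ1 h.le hjB))
      have hy : (if j = 1 then (0 : ℝ) else (if M ≤ a (j - 1) then (1 : ℝ) else 0)) = 1 := by
        rw [if_neg (show j ≠ 1 by omega),
          if_pos (hJM.trans (ha J (j - 1) hJ1 (by omega) (by omega)))]
      rw [hx, hy, if_neg (show j ≠ J by omega)]; ring
  rw [Finset.sum_congr rfl key, Finset.sum_ite_eq' _ J]
  rw [if_pos (Finset.mem_Icc.mpr ⟨hJ1, hJB⟩), hMJ]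

theorem meanmax_eq_V_stat (n B : ℕ) (hn : 1 ≤ n) (hB : 0 < B)
    (a : ℕ → ℝ) (ha : ∀ i j, 1 ≤ i → i ≤ j → j ≤ B → a i ≤ a j) :
    ∑ j ∈ Finset.Icc 1 B,
        (((∑ i ∈ Finset.Icc 1 B, if a i ≤ a j then (1 : ℝ) else 0) / B) ^ n
          - if j = 1 then (0 : ℝ)
            else ((∑ i ∈ Finset.Icc 1 B, if a i ≤ a (j - 1) then (1 : ℝ) else 0) / B) ^ n)
        * a j
    = (∑ f : Fin n → Fin B,
        Finset.univ.sup' ⟨⟨0, by omega⟩, Finset.mem_univ _⟩ (fun i => a ((f i : ℕ) + 1)))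
        / (B : ℝ) ^ n := by
  classical
  have hB0 : (B : ℝ) ≠ 0 := Nat.cast_ne_zero.mpr hB.ne'
  have hBn : (B : ℝ) ^ n ≠ 0 := pow_ne_zero _ hB0
  rw [eq_div_iff hBn, Finset.sum_mul]
  -- rewrite each summand
  have step : ∀ j ∈ Finset.Icc 1 B,
      (((∑ i ∈ Finset.Icc 1 B, if a i ≤ a j then (1 : ℝ) else 0) / B) ^ n
          - if j = 1 then (0 : ℝ)
            else ((∑ i ∈ Finset.Icc 1 B, if a i ≤ a (j - 1) then (1 : ℝ) else 0) / B) ^ n)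
        * a j * (B : ℝ) ^ n
      = ∑ f : Fin n → Fin B,
          ((if (Finset.univ.sup' ⟨⟨0, by omega⟩, Finset.mem_univ _⟩
                (fun i => a ((f i : ℕ) + 1))) ≤ a j then (1 : ℝ) else 0)
            - if j = 1 then (0 : ℝ)
              else (if (Finset.univ.sup' ⟨⟨0, by omega⟩, Finset.mem_univ _⟩
                (fun i => a ((f i : ℕ) + 1))) ≤ a (j - 1) then (1 : ℝ) else 0)) * a j := by
    intro j hj
    have e1 : ∀ t : ℝ,
        ((∑ i ∈ Finset.Icc 1 B, if a i ≤ t then (1 : ℝ) else 0) / B) ^ n * (B : ℝ) ^ n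
        = ∑ f : Fin n → Fin B,
            if (Finset.univ.sup' ⟨⟨0, by omega⟩, Finset.mem_univ _⟩
                (fun i => a ((f i : ℕ) + 1))) ≤ t then (1 : ℝ) else 0 := by
      intro t
      rw [div_pow, div_mul_cancel₀ _ hBn, pow_cnt_eq n B a t]
      refine Finset.sum_congr rfl fun f _ => ?_
      congr 1
      simp [Finset.sup'_le_iff]
      exact ⟨fun h => Finset.sup'_le _ _ fun i _ => h i, fun h i => (Finset.le_sup' _ (Finset.mem_univ i)).trans h⟩
    rcases eq_or_ne j 1 with hj1 | hj1
    · simp only [if_pos hj1, sub_zero]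
      rw [mul_assoc, mul_comm (a j), ← mul_assoc, e1 (a j), Finset.sum_mul]
    · simp only [if_neg hj1]
      rw [sub_mul, sub_mul, mul_assoc, mul_comm (a j), ← mul_assoc, e1 (a j),
        mul_assoc, mul_comm (a j), ← mul_assoc, e1 (a (j - 1)),
        ← sub_mul, ← Finset.sum_sub_distrib, Finset.sum_mul]
  rw [Finset.sum_congr rfl step, Finset.sum_comm]
  refine Finset.sum_congr rfl fun f _ => ?_
  obtain ⟨i0, -, hi0⟩ := Finset.exists_mem_eq_sup'
      (⟨⟨0, by omega⟩, Finset.mem_univ _⟩ :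
        (Finset.univ : Finset (Fin n)).Nonempty)
      (fun i => a ((f i : ℕ) + 1))
  exact telescope_sum B a ha _ ((f i0 : ℕ) + 1) (by omega) (by omega) hi0
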